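/- Let {V1, V2} be a split of a circle graph G with marker vertex v and resulting simple split decomposition {G1, G2}. If G1 has a k1-polygon representation and G2 has a k2-polygon representation, then G has a (k1 + k2)-polygon representation. -/

import Mathlib

open SimpleGraph

/-- The circle on which chord diagrams live (the unit circle as an additive circle). -/
abbrev Circ : Type := AddCircle (1 : ℝ)

/-- A circle representation of a graph `G`: each vertex `v` gets a chord with
distinct endpoints `p v` and `q v`, all `2|V|` endpoints are distinct, and two
distinct vertices are adjacent iff their chords cross (i.e. exactly one endpoint
of one chord lies strictly inside an arc determined by the other chord). -/
structure CircleRep (V : Type) (G : SimpleGraph V) where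
  p : V → Circ
  q : V → Circ
  inj : Function.Injective (Sum.elim p q)
  adj : ∀ u v : V, G.Adj u v ↔ u ≠ v ∧
    Xor' (sbtw (p v) (p u) (q v)) (sbtw (p v) (q u) (q v))

namespace CircleRep

variable {V : Type} {G : SimpleGraph V} (R : CircleRep V G)

/-- The two open arcs of the chord of `v`: `b = true` is the arc from `p v`
clockwise to `q v`, `b = false` is the other arc. -/
def ArcSet (v : V) (b : Bool) : Set Circ :=
  if b then {x | sbtw (R.p v) x (R.q v)} else {x | sbtw (R.q v) x (R.p v)}

/-- The arc `b` of the chord of `v` is empty: it contains both endpoints of no chord. -/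
def ArcEmpty (v : V) (b : Bool) : Prop :=
  ∀ u : V, ¬ (R.p u ∈ R.ArcSet v b ∧ R.q u ∈ R.ArcSet v b)

/-- A chord is peripheral if one of its arcs is empty. -/
def Peripheral (v : V) : Prop := ∃ b : Bool, R.ArcEmpty v b

/-- A set `T` of corner points satisfies the chord of `v` if each of the two
arcs of the chord contains a corner. -/
def SatChord (T : Finset Circ) (v : V) : Prop :=
  (∃ t ∈ T, t ∈ R.ArcSet v true) ∧ (∃ t ∈ T, t ∈ R.ArcSet v false)

/-- `T` is a satisfying set of corners: the corners are distinct from all chord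
endpoints and every chord has a corner in each of its arcs. -/
def GoodCorners (T : Finset Circ) : Prop :=
  (∀ t ∈ T, ∀ v : V, t ≠ R.p v ∧ t ≠ R.q v) ∧ ∀ v : V, R.SatChord T v

/-- The polygon number `ψ_r` of a circle representation: the minimum number of
corners that must be added to satisfy all chords. -/
noncomputable def polyNum : ℕ :=
  sInf {k | ∃ T : Finset Circ, T.card = k ∧ R.GoodCorners T}

/-- `c 0, …, c (ℓ-1)` is an ℓ-independent set in series: there is a point `x`
on the circle such that a clockwise traversal starting at `x` encounters both
endpoints of `c i` before both endpoints of `c j` whenever `i < j`. -/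
def SeriesIndep {ℓ : ℕ} (c : Fin ℓ → V) : Prop :=
  Function.Injective c ∧ ∃ x : Circ,
    (∀ i : Fin ℓ, x ≠ R.p (c i) ∧ x ≠ R.q (c i)) ∧
    ∀ i j : Fin ℓ, i < j →
      ∀ e ∈ ({R.p (c i), R.q (c i)} : Set Circ),
        ∀ f ∈ ({R.p (c j), R.q (c j)} : Set Circ), sbtw x e f

end CircleRep

/-- The polygon number `ψ(G)`: the minimum `k` such that `G` has a circle
representation together with `k` corners satisfying all chords. -/
noncomputable def polygonNumber {V : Type} (G : SimpleGraph V) : ℕ :=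
  sInf {k | ∃ R : CircleRep V G, ∃ T : Finset Circ, T.card = k ∧ R.GoodCorners T}

/-- A permutation graph: a graph having a circle representation admitting two
corner points such that each chord has one corner in each of its arcs. -/
def IsPermutationGraph {V : Type} (G : SimpleGraph V) : Prop :=
  ∃ R : CircleRep V G, ∃ T : Finset Circ, T.card = 2 ∧ R.GoodCorners T

/-- The clique cover number `κ(G)`: least `n` such that the vertex set can be
partitioned into `n` cliques. -/
noncomputable def cliqueCoverNumber {V : Type} (G : SimpleGraph V) : ℕ :=
  sInf {n | ∃ f : V → Fin n, ∀ u v : V, f u = f v → u = v ∨ G.Adj u v}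

/-- The independence number `α(G)`. -/
noncomputable def indepNumber {V : Type} (G : SimpleGraph V) : ℕ :=
  sSup {n | ∃ s : Finset V, (∀ u ∈ s, ∀ v ∈ s, u ≠ v → ¬ G.Adj u v) ∧ s.card = n}

/-- `A` is an asteroidal set of `G`: for every `a ∈ A`, any two vertices of
`A \ {a}` are connected by a path in `G - N[a]`. -/
def IsAsteroidal {V : Type} (G : SimpleGraph V) (A : Set V) : Prop :=
  ∀ a ∈ A, ∀ x ∈ A, ∀ y ∈ A, x ≠ a → y ≠ a →
    ∃ (hx : x ∈ {w | w ≠ a ∧ ¬ G.Adj a w}) (hy : y ∈ {w | w ≠ a ∧ ¬ G.Adj a w}),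
      (G.induce {w | w ≠ a ∧ ¬ G.Adj a w}).Reachable ⟨x, hx⟩ ⟨y, hy⟩

/-- The asteroidal number `an(G)`: maximum size of an asteroidal set. -/
noncomputable def asteroidalNumber {V : Type} (G : SimpleGraph V) : ℕ :=
  sSup {n | ∃ A : Finset V, IsAsteroidal G ↑A ∧ A.card = n}

/-- `G` is AT-free: it has no asteroidal triple. -/
def ATFree {V : Type} (G : SimpleGraph V) : Prop :=
  ¬ ∃ a b c : V, a ≠ b ∧ a ≠ c ∧ b ≠ c ∧ IsAsteroidal G {a, b, c}

/-- `G` is distance hereditary: in every connected induced subgraph, distances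
agree with those of `G`. -/
def DistanceHereditary {V : Type} (G : SimpleGraph V) : Prop :=
  ∀ s : Set V, (G.induce s).Connected →
    ∀ u v : ↥s, (G.induce s).dist u v = G.dist (u : V) (v : V)

/-- `{V1, V2}` is a split of `G`. -/
def IsSplit {V : Type} (G : SimpleGraph V) (V1 V2 : Set V) : Prop :=
  V1 ∪ V2 = Set.univ ∧ Disjoint V1 V2 ∧ 1 < V1.ncard ∧ 1 < V2.ncard ∧
    ∀ x ∈ V1, ∀ y ∈ V2,
      (G.Adj x y ↔ (∃ y' ∈ V2, G.Adj x y') ∧ (∃ x' ∈ V1, G.Adj x' y))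



set_option maxHeartbeats 1000000
set_option linter.unusedVariables false
set_option linter.unusedTactic false
set_option linter.unreachableTactic false
set_option linter.deprecated false


def Pat (u v w : ℝ) : Prop := (u<v ∧ v<w) ∨ (v<w ∧ w<u) ∨ (w<u ∧ u<v)

lemma fract_sbtw {a b c : ℝ} :
    sbtw (↑a : Circ) ↑b ↑c ↔
      0 < Int.fract (b - a) ∧ Int.fract (b - a) < Int.fract (c - a) := by
  rw [sbtw_iff_btw_not_btw, QuotientAddGroup.btw_coe_iff, QuotientAddGroup.btw_coe_iff,
    toIcoMod_eq_add_fract_mul, toIcoMod_eq_add_fract_mul,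
    toIocMod_eq_sub_fract_mul, toIocMod_eq_sub_fract_mul]
  simp only [div_one, mul_one]
  have e1 : a + 1 - c = (a - c) + 1 := by ring
  have e2 : c + 1 - a = (c - a) + 1 := by ring
  rw [e1, e2, Int.fract_add_one, Int.fract_add_one]
  have e3 : a - c = -(c - a) := by ring
  rw [e3]
  have hβ0 : (0:ℝ) ≤ Int.fract (b - a) := Int.fract_nonneg _
  have hβ1 : Int.fract (b - a) < 1 := Int.fract_lt_one _
  have hγ0 : (0:ℝ) ≤ Int.fract (c - a) := Int.fract_nonneg _
  have hγ1 : Int.fract (c - a) < 1 := Int.fract_lt_one _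
  have hδ : Int.fract (b - c) = Int.fract (Int.fract (b - a) - Int.fract (c - a)) := by
    rw [Int.fract_eq_fract]
    refine ⟨⌊b - a⌋ - ⌊c - a⌋, ?_⟩
    push_cast
    rw [← Int.self_sub_floor, ← Int.self_sub_floor]
    ring
  by_cases hγ : Int.fract (c - a) = 0
  · rw [Int.fract_neg_eq_zero.2 hγ, hγ]
    have h3 : Int.fract (b - c) < 1 := Int.fract_lt_one _
    constructor
    · rintro ⟨-, h2⟩; exfalso; exact h2 (by linarith)
    · rintro ⟨-, h2⟩; linarith
  · rw [Int.fract_neg hγ, hδ]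
    by_cases hbg : Int.fract (c - a) ≤ Int.fract (b - a)
    · have h4 : Int.fract (Int.fract (b - a) - Int.fract (c - a))
          = Int.fract (b - a) - Int.fract (c - a) :=
        Int.fract_eq_self.2 ⟨by linarith, by linarith⟩
      rw [h4]
      constructor
      · rintro ⟨h1, h2⟩; exfalso; exact h2 (by linarith)
      · rintro ⟨h1, h2⟩; linarith
    · push_neg at hbg
      have h4 : Int.fract (Int.fract (b - a) - Int.fract (c - a))
          = Int.fract (b - a) - Int.fract (c - a) + 1 := by
        rw [← Int.fract_add_one (Int.fract (b - a) - Int.fract (c - a))]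
        exact Int.fract_eq_self.2 ⟨by linarith, by linarith⟩
      rw [h4]
      constructor
      · rintro ⟨h1, h2⟩
        refine ⟨?_, hbg⟩
        by_contra h
        push_neg at h
        exact h2 (by linarith)
      · rintro ⟨h1, h2⟩
        exact ⟨by linarith, by intro h; linarith⟩


lemma fract_of_Ico {u v : ℝ} (hu : u ∈ Set.Ico (0:ℝ) 1) (hv : v ∈ Set.Ico (0:ℝ) 1) :
    Int.fract (v - u) = if u ≤ v then v - u else v - u + 1 := by
  obtain ⟨hu0, hu1⟩ := hu; obtain ⟨hv0, hv1⟩ := hv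
  split_ifs with h
  · exact Int.fract_eq_self.2 ⟨by linarith, by linarith⟩
  · push_neg at h
    rw [← Int.fract_add_one (v - u)]
    exact Int.fract_eq_self.2 ⟨by linarith, by linarith⟩

lemma chart_sbtw {x y z : ℝ} (hx : x ∈ Set.Ico (0:ℝ) 1) (hy : y ∈ Set.Ico (0:ℝ) 1)
    (hz : z ∈ Set.Ico (0:ℝ) 1) : sbtw (↑x : Circ) ↑y ↑z ↔ Pat x y z := by
  rw [fract_sbtw, fract_of_Ico hx hy, fract_of_Ico hx hz]
  obtain ⟨hx0, hx1⟩ := hx; obtain ⟨hy0, hy1⟩ := hy; obtain ⟨hz0, hz1⟩ := hz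
  unfold Pat
  split_ifs with h1 h2 h2 <;> (try push_neg at *)
  all_goals constructor
  all_goals try (rintro (⟨a1, a2⟩ | ⟨a1, a2⟩ | ⟨a1, a2⟩) <;> exact ⟨by linarith, by linarith⟩)
  all_goals rintro ⟨a1, a2⟩
  all_goals first
      | (left; exact ⟨by linarith, by linarith⟩)
      | (right; left; exact ⟨by linarith, by linarith⟩)
      | (right; right; exact ⟨by linarith, by linarith⟩)
      | (exfalso; linarith)

lemma coe_circ_inj {x y : ℝ} (hx : x ∈ Set.Ico (0:ℝ) 1) (hy : y ∈ Set.Ico (0:ℝ) 1) :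
    (↑x : Circ) = ↑y ↔ x = y := by
  have := AddCircle.coe_eq_coe_iff_of_mem_Ico (p := (1:ℝ)) (a := 0)
    (by simpa using hx) (by simpa using hy)
  simpa using this

noncomputable def lift1 (t : Circ) : ℝ := ((AddCircle.equivIco 1 0) t : ℝ)

lemma lift1_mem (t : Circ) : lift1 t ∈ Set.Ico (0:ℝ) 1 := by
  have := ((AddCircle.equivIco 1 0) t).2
  simpa [lift1] using this

lemma lift1_coe (t : Circ) : (↑(lift1 t) : Circ) = t := by
  have := (AddCircle.equivIco 1 0).symm_apply_apply t
  exact this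

lemma lift1_coe_eq {x : ℝ} (hx : x ∈ Set.Ico (0:ℝ) 1) : lift1 ↑x = x := by
  have h := coe_circ_inj (lift1_mem ((x : Circ))) hx
  exact h.1 (lift1_coe _)

lemma lift1_inj {s t : Circ} (h : lift1 s = lift1 t) : s = t := by
  rw [← lift1_coe s, ← lift1_coe t, h]

lemma sbtw_rot (r x y z : Circ) : sbtw x y z ↔ sbtw (x - r) (y - r) (z - r) := by
  induction x using QuotientAddGroup.induction_on
  induction y using QuotientAddGroup.induction_on
  induction z using QuotientAddGroup.induction_on
  induction r using QuotientAddGroup.induction_on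
  rename_i xx yy zz rr
  have e : ∀ u v : ℝ, (↑u : Circ) - ↑v = ↑(u - v) := fun u v => rfl
  rw [e, e, e, fract_sbtw, fract_sbtw]
  have e1 : yy - rr - (xx - rr) = yy - xx := by ring
  have e2 : zz - rr - (xx - rr) = zz - xx := by ring
  rw [e1, e2]

lemma sbtw_chart (r x y z : Circ) :
    sbtw x y z ↔ Pat (lift1 (x - r)) (lift1 (y - r)) (lift1 (z - r)) := by
  have h := chart_sbtw (lift1_mem (x - r)) (lift1_mem (y - r)) (lift1_mem (z - r))
  rw [lift1_coe, lift1_coe, lift1_coe] at h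
  exact (sbtw_rot r x y z).trans h



lemma Pat_rev {u v w : ℝ} (huv : u ≠ v) (hvw : v ≠ w) (huw : u ≠ w) :
    Pat w v u ↔ ¬ Pat u v w := by
  unfold Pat
  rcases lt_trichotomy u v with h1 | h1 | h1 <;>
  rcases lt_trichotomy v w with h2 | h2 | h2 <;>
  rcases lt_trichotomy u w with h3 | h3 | h3 <;>
  first
    | (exact absurd h1 huv)
    | (exact absurd h2 hvw)
    | (exact absurd h3 huw)
    | (constructor
       · rintro (⟨a1, a2⟩ | ⟨a1, a2⟩ | ⟨a1, a2⟩) <;>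
           (rintro (⟨b1, b2⟩ | ⟨b1, b2⟩ | ⟨b1, b2⟩) <;> linarith)
       · intro hn
         first
          | (left; exact ⟨by linarith, by linarith⟩)
          | (right; left; exact ⟨by linarith, by linarith⟩)
          | (right; right; exact ⟨by linarith, by linarith⟩)
          | (exfalso; exact hn (by left; exact ⟨by linarith, by linarith⟩))
          | (exfalso; exact hn (by right; left; exact ⟨by linarith, by linarith⟩))
          | (exfalso; exact hn (by right; right; exact ⟨by linarith, by linarith⟩)))

lemma xor_not_not' {a b : Prop} : Xor' (¬a) (¬b) ↔ Xor' a b := by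
  unfold Xor' Xor; tauto

lemma xor_congr {a b c d : Prop} (h1 : a ↔ c) (h2 : b ↔ d) : Xor' a b ↔ Xor' c d := by
  unfold Xor' Xor; tauto

lemma xor_comm' {a b : Prop} : Xor' a b ↔ Xor' b a := by unfold Xor' Xor; tauto

lemma exists_eps (S : Finset ℝ) {m : ℝ} (h0 : 0 < m) (h1 : m < 1) :
    ∃ ε : ℝ, 0 < ε ∧ ε ≤ m ∧ m + ε ≤ 1 ∧
      ∀ s ∈ S, s ∉ Set.Ioo 0 ε ∧ s ∉ Set.Ioo m (m + ε) := by
  classical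
  set C : Finset ℝ :=
    insert m (insert (1 - m) ((S.filter (fun s => 0 < s)) ∪ ((S.filter (fun s => m < s)).image (fun s => s - m)))) with hC
  have hne : C.Nonempty := ⟨m, by simp [hC]⟩
  set ε := C.min' hne with hε
  have hmem : ∀ c ∈ C, ε ≤ c := fun c hc => Finset.min'_le _ _ hc
  have hpos : 0 < ε := by
    have : ε ∈ C := Finset.min'_mem _ _
    simp only [hC, Finset.mem_insert, Finset.mem_union, Finset.mem_filter, Finset.mem_image] at this
    rcases this with h | h | h | h
    · linarith
    · linarith
    · exact h.2
    · obtain ⟨a, ⟨_, ha⟩, hb⟩ := h; linarith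
  refine ⟨ε, hpos, hmem m (by simp [hC]), by have := hmem (1 - m) (by simp [hC]); linarith, ?_⟩
  intro s hs
  constructor
  · rintro ⟨hs1, hs2⟩
    have : s ∈ C := by simp [hC, Finset.mem_filter]; tauto
    have := hmem s this; linarith
  · rintro ⟨hs1, hs2⟩
    have : s - m ∈ C := by
      simp only [hC, Finset.mem_insert, Finset.mem_union, Finset.mem_filter, Finset.mem_image]
      right; right; right; exact ⟨s, ⟨hs, hs1⟩, rfl⟩
    have := hmem _ this; linarith

lemma atomL {α β s x : ℝ} (hs : s ∈ Set.Ioo α β) (hx : x ∉ Set.Ico α β) :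
    (x < s ↔ x < α) ∧ (s < x ↔ α < x) := by
  simp only [Set.mem_Ioo, Set.mem_Ico, not_and, not_lt] at hs hx
  obtain ⟨h1, h2⟩ := hs
  constructor <;> constructor <;> intro h
  · by_contra hc; push_neg at hc; have := hx hc; linarith
  · linarith
  · by_contra hc; push_neg at hc; linarith
  · have := hx (le_of_lt h); linarith

lemma Pat_congr {a b c a' b' c' : ℝ} (h1 : a<b ↔ a'<b') (h2 : b<c ↔ b'<c')
    (h3 : c<a ↔ c'<a') : (Pat a b c ↔ Pat a' b' c') := by unfold Pat; rw [h1, h2, h3]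

lemma Pat_zero {w m : ℝ} (hm : 0 ≤ m) : Pat 0 w m ↔ 0 < w ∧ w < m := by
  unfold Pat
  constructor
  · rintro (h | h | h)
    · exact h
    · exfalso; rcases h with ⟨_, h2⟩; linarith
    · exfalso; rcases h with ⟨h1, _⟩; linarith
  · exact fun h => Or.inl h

lemma Pat_mono {f : ℝ → ℝ} {s : Set ℝ} (hf : StrictMonoOn f s) {u v w : ℝ}
    (hu : u ∈ s) (hv : v ∈ s) (hw : w ∈ s) :
    Pat (f u) (f v) (f w) ↔ Pat u v w :=
  Pat_congr (hf.lt_iff_lt hu hv) (hf.lt_iff_lt hv hw) (hf.lt_iff_lt hw hu)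

lemma Pat_out1 {ε m1 s t x : ℝ} (hε : 0 < ε) (hεm : ε ≤ m1)
    (hs : s ∈ Set.Ioo 0 ε) (ht : t ∈ Set.Ioo m1 (m1+ε))
    (hx : x ∉ Set.Ico 0 ε) (hx' : x ∉ Set.Ico m1 (m1+ε)) : Pat s x t ↔ Pat 0 x m1 :=
  Pat_congr (atomL hs hx).2 (atomL ht hx').1
    (iff_of_false (by obtain ⟨h1, h2⟩ := hs; obtain ⟨h3, h4⟩ := ht; intro h; linarith)
      (by intro h; linarith))

lemma Pat_out1' {ε m1 s t x : ℝ} (hε : 0 < ε) (hεm : ε ≤ m1)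
    (hs : s ∈ Set.Ioo m1 (m1+ε)) (ht : t ∈ Set.Ioo 0 ε)
    (hx : x ∉ Set.Ico 0 ε) (hx' : x ∉ Set.Ico m1 (m1+ε)) : Pat s x t ↔ Pat m1 x 0 :=
  Pat_congr (atomL hs hx').2 (atomL ht hx).1
    (iff_of_true (by obtain ⟨h1, h2⟩ := hs; obtain ⟨h3, h4⟩ := ht; linarith) (by linarith))

lemma Pat_same {α β s t x : ℝ} (hs : s ∈ Set.Ioo α β) (ht : t ∈ Set.Ioo α β)
    (hx : x ∉ Set.Ico α β) (hxa : x ≠ α) : Pat s x t ↔ t < s := by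
  have h1 := (atomL hs hx).2
  have h2 := (atomL ht hx).1
  unfold Pat
  rw [h1, h2]
  rcases lt_or_gt_of_ne hxa with h | h
  · constructor
    · rintro (⟨a, b⟩ | ⟨a, b⟩ | ⟨a, b⟩) <;> first | exact b | (exact a) | linarith
    · intro h'; exact Or.inr (Or.inl ⟨h, h'⟩)
  · constructor
    · rintro (⟨a, b⟩ | ⟨a, b⟩ | ⟨a, b⟩) <;> first | exact b | (exact a) | linarith
    · intro h'; exact Or.inr (Or.inr ⟨h', h⟩)

lemma Pat_sub_mid {α β s x y : ℝ} (hs : s ∈ Set.Ioo α β)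
    (hx : x ∉ Set.Ico α β) (hy : y ∉ Set.Ico α β) : Pat x s y ↔ Pat x α y :=
  Pat_congr (atomL hs hx).1 (atomL hs hy).2 Iff.rfl

lemma xor_self' {a : Prop} : ¬ Xor' a a := by unfold Xor' Xor; tauto
lemma not_xor_iff' {a b : Prop} (h : ¬ Xor' a b) : (a ↔ b) := by unfold Xor' Xor at h; tauto

noncomputable def psi (m1 m2 ε u : ℝ) : ℝ :=
  if u < m2 then ε * (u / m2) else m1 + ε * ((u - m2) / (1 - m2))

lemma psi_A {m1 m2 ε : ℝ} (hε : 0 < ε) (hm2 : 0 < m2) {u : ℝ} (h0 : 0 < u) (h2 : u < m2) :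
    psi m1 m2 ε u ∈ Set.Ioo 0 ε := by
  unfold psi; rw [if_pos h2]
  constructor
  · positivity
  · have h3 : u / m2 < 1 := (div_lt_one hm2).2 h2
    nlinarith

lemma psi_B {m1 m2 ε : ℝ} (hε : 0 < ε) (hm2' : m2 < 1) {u : ℝ} (h2 : m2 < u) (h1 : u < 1) :
    psi m1 m2 ε u ∈ Set.Ioo m1 (m1 + ε) := by
  unfold psi; rw [if_neg (not_lt.2 h2.le)]
  have hd : 0 < 1 - m2 := by linarith
  constructor
  · have : 0 < (u - m2) / (1 - m2) := div_pos (by linarith) hd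
    nlinarith
  · have : (u - m2) / (1 - m2) < 1 := (div_lt_one hd).2 (by linarith)
    nlinarith

lemma psi_mono {m1 m2 ε : ℝ} (hε : 0 < ε) (hεm : ε ≤ m1) (hm2 : 0 < m2) (hm2' : m2 < 1) :
    StrictMonoOn (psi m1 m2 ε) {u | 0 < u ∧ u < 1 ∧ u ≠ m2} := by
  intro u hu v hv huv
  obtain ⟨hu0, hu1, hum⟩ := hu
  obtain ⟨hv0, hv1, hvm⟩ := hv
  rcases lt_or_gt_of_ne hum with h1 | h1 <;> rcases lt_or_gt_of_ne hvm with h2 | h2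
  · unfold psi; rw [if_pos h1, if_pos h2]
    have h3 : u / m2 < v / m2 := by rw [div_lt_div_iff₀ hm2 hm2]; nlinarith
    exact mul_lt_mul_of_pos_left h3 hε
  · have hA := psi_A (m1 := m1) hε hm2 hu0 h1
    have hB := psi_B (m1 := m1) hε hm2' h2 hv1
    obtain ⟨_, a2⟩ := hA; obtain ⟨b1, _⟩ := hB
    linarith
  · linarith
  · unfold psi; rw [if_neg (not_lt.2 h1.le), if_neg (not_lt.2 h2.le)]
    have hd : 0 < 1 - m2 := by linarith
    have h3 : (u - m2) / (1 - m2) < (v - m2) / (1 - m2) := by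
      rw [div_lt_div_iff₀ hd hd]; nlinarith
    have := mul_lt_mul_of_pos_left h3 hε
    linarith

lemma lift1_zero : lift1 (0 : Circ) = 0 := by
  have : ((0:ℝ) : Circ) = 0 := rfl
  rw [← this, lift1_coe_eq ⟨le_refl 0, one_pos⟩]

lemma xor_comm'' {a b : Prop} : Xor' a b ↔ Xor' b a := by unfold Xor' Xor; tauto

lemma mem_arc_true {V : Type} {G : SimpleGraph V} (R : CircleRep V G) (v : V) (x : Circ) :
    x ∈ R.ArcSet v true ↔ sbtw (R.p v) x (R.q v) := by
  simp [CircleRep.ArcSet]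

lemma mem_arc_false {V : Type} {G : SimpleGraph V} (R : CircleRep V G) (v : V) (x : Circ) :
    x ∈ R.ArcSet v false ↔ sbtw (R.q v) x (R.p v) := by
  simp [CircleRep.ArcSet]

theorem stmt18 {V : Type} [Fintype V] (G : SimpleGraph V) (V1 V2 : Set V)
    (hsplit : IsSplit G V1 V2) (hG : Nonempty (CircleRep V G)) (k1 k2 : ℕ)
    (h1 : ∃ (R : CircleRep (↥V1 ⊕ Unit) (SimpleGraph.fromRel (fun a b =>
        match a, b with
        | Sum.inl x, Sum.inl y => G.Adj x.1 y.1
        | Sum.inl x, Sum.inr _ => ∃ y ∈ V2, G.Adj x.1 y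
        | _, _ => False)))
      (T : Finset Circ), T.card = k1 ∧ R.GoodCorners T)
    (h2 : ∃ (R : CircleRep (↥V2 ⊕ Unit) (SimpleGraph.fromRel (fun a b =>
        match a, b with
        | Sum.inl y, Sum.inl y' => G.Adj y.1 y'.1
        | Sum.inl y, Sum.inr _ => ∃ x ∈ V1, G.Adj y.1 x
        | _, _ => False)))
      (T : Finset Circ), T.card = k2 ∧ R.GoodCorners T) :
    ∃ (R : CircleRep V G) (T : Finset Circ),
      T.card = k1 + k2 ∧ R.GoodCorners T := by
  classical
  set G1 : SimpleGraph (↥V1 ⊕ Unit) := SimpleGraph.fromRel (fun a b =>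
        match a, b with
        | Sum.inl x, Sum.inl y => G.Adj x.1 y.1
        | Sum.inl x, Sum.inr _ => ∃ y ∈ V2, G.Adj x.1 y
        | _, _ => False) with hG1def
  set G2 : SimpleGraph (↥V2 ⊕ Unit) := SimpleGraph.fromRel (fun a b =>
        match a, b with
        | Sum.inl y, Sum.inl y' => G.Adj y.1 y'.1
        | Sum.inl y, Sum.inr _ => ∃ x ∈ V1, G.Adj y.1 x
        | _, _ => False) with hG2def
  obtain ⟨R1, T1, hT1c, hT1g⟩ := h1
  obtain ⟨R2, T2, hT2c, hT2g⟩ := h2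
  obtain ⟨hT1e, hT1s⟩ := hT1g
  obtain ⟨hT2e, hT2s⟩ := hT2g
  obtain ⟨hun, hdis, hn1, hn2, hsp⟩ := hsplit
  haveI : Fintype ↥V1 := Set.Finite.fintype (Set.toFinite V1)
  haveI : Fintype ↥V2 := Set.Finite.fintype (Set.toFinite V2)
  have hv2 : ∀ {v : V}, v ∉ V1 → v ∈ V2 := by
    intro v h
    have hm : v ∈ V1 ∪ V2 := by rw [hun]; trivial
    exact hm.resolve_left h
  -- R1 injectivity facts
  set r1 : Circ := R1.p (Sum.inr ()) with hr1def
  have hpq1 : ∀ u w, R1.p u ≠ R1.q w := by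
    intro u w h
    have h2 := R1.inj (a₁ := Sum.inl u) (a₂ := Sum.inr w) (by simpa using h)
    simp at h2
  have hp1i : Function.Injective R1.p := by
    intro a b h
    have h2 := R1.inj (a₁ := Sum.inl a) (a₂ := Sum.inl b) (by simpa using h)
    simpa using h2
  have hq1i : Function.Injective R1.q := by
    intro a b h
    have h2 := R1.inj (a₁ := Sum.inr a) (a₂ := Sum.inr b) (by simpa using h)
    simpa using h2
  have hsub1inj : ∀ {x y : Circ}, lift1 (x - r1) = lift1 (y - r1) → x = y := by
    intro x y h
    exact sub_left_inj.mp (lift1_inj h)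
  set m1 : ℝ := lift1 (R1.q (Sum.inr ()) - r1) with hm1def
  have hm1mem : m1 ∈ Set.Ico (0:ℝ) 1 := lift1_mem _
  have hm1pos : 0 < m1 := by
    rcases eq_or_lt_of_le hm1mem.1 with h | h
    · exfalso
      have he : lift1 (R1.q (Sum.inr ()) - r1) = lift1 (r1 - r1) := by
        rw [sub_self, lift1_zero, ← hm1def, ← h]
      exact hpq1 (Sum.inr ()) (Sum.inr ()) (hsub1inj he).symm
    · exact h
  have hm1lt : m1 < 1 := hm1mem.2
  set S : Finset ℝ := ((Finset.univ.image fun u : ↥V1 ⊕ Unit => lift1 (R1.p u - r1)) ∪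
      (Finset.univ.image fun u : ↥V1 ⊕ Unit => lift1 (R1.q u - r1))) ∪
      T1.image (fun t => lift1 (t - r1)) with hSdef
  obtain ⟨ε, hε0, hεm, hεm', hεS⟩ := exists_eps S hm1pos hm1lt
  have hSp : ∀ u, lift1 (R1.p u - r1) ∈ S := by
    intro u
    rw [hSdef]
    exact Finset.mem_union_left _ (Finset.mem_union_left _
      (Finset.mem_image_of_mem _ (Finset.mem_univ u)))
  have hSq : ∀ u, lift1 (R1.q u - r1) ∈ S := by
    intro u
    rw [hSdef]
    exact Finset.mem_union_left _ (Finset.mem_union_right _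
      (Finset.mem_image_of_mem _ (Finset.mem_univ u)))
  have hST : ∀ t ∈ T1, lift1 (t - r1) ∈ S := by
    intro t ht
    rw [hSdef]
    exact Finset.mem_union_right _ (Finset.mem_image_of_mem _ ht)
  have hout : ∀ x : ℝ, x ∈ S → x ∈ Set.Ico (0:ℝ) 1 → x ≠ 0 → x ≠ m1 →
      x ∉ Set.Ico 0 ε ∧ x ∉ Set.Ico m1 (m1+ε) ∧ 0 < x := by
    intro x hxS hxI hx0 hxm
    obtain ⟨hA, hB⟩ := hεS x hxS
    have hx0' : 0 < x := lt_of_le_of_ne hxI.1 (Ne.symm hx0)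
    refine ⟨?_, ?_, hx0'⟩
    · intro hc
      exact hA ⟨hx0', hc.2⟩
    · intro hc
      exact hB ⟨lt_of_le_of_ne hc.1 (Ne.symm hxm), hc.2⟩
  have hV1pt : ∀ (u : ↥V1) (c : Circ), (c = R1.p (Sum.inl u) ∨ c = R1.q (Sum.inl u)) →
      lift1 (c - r1) ∉ Set.Ico 0 ε ∧ lift1 (c - r1) ∉ Set.Ico m1 (m1+ε) ∧
        0 < lift1 (c - r1) ∧ lift1 (c - r1) ≠ m1 := by
    intro u c hc
    have hS' : lift1 (c - r1) ∈ S := by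
      rcases hc with h | h
      · rw [h]; exact hSp _
      · rw [h]; exact hSq _
    have h0 : lift1 (c - r1) ≠ 0 := by
      intro h
      have he : lift1 (c - r1) = lift1 (r1 - r1) := by rw [sub_self, lift1_zero, h]
      have h2 := hsub1inj he
      rcases hc with h' | h'
      · rw [h', hr1def] at h2
        have h3 := hp1i h2
        simp at h3
      · rw [h', hr1def] at h2
        exact hpq1 _ _ h2.symm
    have hm : lift1 (c - r1) ≠ m1 := by
      intro h
      rw [hm1def] at h
      have h2 := hsub1inj h
      rcases hc with h' | h'
      · rw [h'] at h2
        exact hpq1 _ _ h2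
      · rw [h'] at h2
        have h3 := hq1i h2
        simp at h3
    obtain ⟨a, b, c'⟩ := hout _ hS' (lift1_mem _) h0 hm
    exact ⟨a, b, c', hm⟩
  have hT1chart : ∀ t ∈ T1, lift1 (t - r1) ∉ Set.Ico 0 ε ∧
      lift1 (t - r1) ∉ Set.Ico m1 (m1+ε) := by
    intro t ht
    have h0 : lift1 (t - r1) ≠ 0 := by
      intro h
      have he : lift1 (t - r1) = lift1 (r1 - r1) := by rw [sub_self, lift1_zero, h]
      exact (hT1e t ht (Sum.inr ())).1 (by rw [hsub1inj he, hr1def])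
    have hm : lift1 (t - r1) ≠ m1 := by
      intro h
      rw [hm1def] at h
      exact (hT1e t ht (Sum.inr ())).2 (hsub1inj h)
    obtain ⟨a, b, _⟩ := hout _ (hST t ht) (lift1_mem _) h0 hm
    exact ⟨a, b⟩
  -- R2 side
  set r2 : Circ := R2.p (Sum.inr ()) with hr2def
  have hpq2 : ∀ u w, R2.p u ≠ R2.q w := by
    intro u w h
    have h2 := R2.inj (a₁ := Sum.inl u) (a₂ := Sum.inr w) (by simpa using h)
    simp at h2
  have hp2i : Function.Injective R2.p := by
    intro a b h
    have h2 := R2.inj (a₁ := Sum.inl a) (a₂ := Sum.inl b) (by simpa using h)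
    simpa using h2
  have hq2i : Function.Injective R2.q := by
    intro a b h
    have h2 := R2.inj (a₁ := Sum.inr a) (a₂ := Sum.inr b) (by simpa using h)
    simpa using h2
  have hsub2inj : ∀ {x y : Circ}, lift1 (x - r2) = lift1 (y - r2) → x = y := by
    intro x y h
    exact sub_left_inj.mp (lift1_inj h)
  set m2 : ℝ := lift1 (R2.q (Sum.inr ()) - r2) with hm2def
  have hm2mem : m2 ∈ Set.Ico (0:ℝ) 1 := lift1_mem _
  have hm2pos : 0 < m2 := by
    rcases eq_or_lt_of_le hm2mem.1 with h | h
    · exfalso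
      have he : lift1 (R2.q (Sum.inr ()) - r2) = lift1 (r2 - r2) := by
        rw [sub_self, lift1_zero, ← hm2def, ← h]
      exact hpq2 (Sum.inr ()) (Sum.inr ()) (hsub2inj he).symm
    · exact h
  have hm2lt : m2 < 1 := hm2mem.2
  have hD : ∀ t : Circ, t ≠ r2 → t ≠ R2.q (Sum.inr ()) →
      0 < lift1 (t - r2) ∧ lift1 (t - r2) < 1 ∧ lift1 (t - r2) ≠ m2 := by
    intro t h1 h2
    refine ⟨?_, (lift1_mem _).2, ?_⟩
    · rcases eq_or_lt_of_le (lift1_mem (t - r2)).1 with h | h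
      · exfalso
        apply h1
        apply hsub2inj
        rw [sub_self, lift1_zero, ← h]
      · exact h
    · intro h
      rw [hm2def] at h
      exact h2 (hsub2inj h)
  have hψm : StrictMonoOn (psi m1 m2 ε) {u : ℝ | 0 < u ∧ u < 1 ∧ u ≠ m2} :=
    psi_mono hε0 hεm hm2pos hm2lt
  set Φ : Circ → Circ := fun t => ((psi m1 m2 ε (lift1 (t - r2)) : ℝ) : Circ) with hΦdef
  have hψIoo : ∀ u : ℝ, 0 < u → u < 1 → u ≠ m2 →
      psi m1 m2 ε u ∈ Set.Ioo 0 ε ∪ Set.Ioo m1 (m1+ε) := by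
    intro u h0 h1 hm
    rcases lt_or_gt_of_ne hm with h | h
    · exact Or.inl (psi_A hε0 hm2pos h0 h)
    · exact Or.inr (psi_B (m1 := m1) hε0 hm2lt h h1)
  have hψIco : ∀ u : ℝ, 0 < u → u < 1 → u ≠ m2 → psi m1 m2 ε u ∈ Set.Ico (0:ℝ) 1 := by
    intro u h0 h1 hm
    rcases hψIoo u h0 h1 hm with h | h <;> obtain ⟨a, b⟩ := h <;> exact ⟨by linarith, by linarith⟩
  have hΦl : ∀ t : Circ, 0 < lift1 (t - r2) → lift1 (t - r2) < 1 → lift1 (t - r2) ≠ m2 →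
      lift1 (Φ t) = psi m1 m2 ε (lift1 (t - r2)) := by
    intro t h0 h1 hm
    rw [hΦdef]
    exact lift1_coe_eq (hψIco _ h0 h1 hm)
  have hsb0 : ∀ x y z : Circ, sbtw x y z ↔ Pat (lift1 x) (lift1 y) (lift1 z) := by
    intro x y z
    have h := sbtw_chart 0 x y z
    simpa [sub_zero] using h
  have hΦs : ∀ t1 t2 t3 : Circ,
      (t1 ≠ r2 ∧ t1 ≠ R2.q (Sum.inr ())) → (t2 ≠ r2 ∧ t2 ≠ R2.q (Sum.inr ())) →
      (t3 ≠ r2 ∧ t3 ≠ R2.q (Sum.inr ())) →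
      (sbtw (Φ t1) (Φ t2) (Φ t3) ↔ sbtw t1 t2 t3) := by
    intro t1 t2 t3 h1 h2 h3
    obtain ⟨a1, b1, c1⟩ := hD t1 h1.1 h1.2
    obtain ⟨a2, b2, c2⟩ := hD t2 h2.1 h2.2
    obtain ⟨a3, b3, c3⟩ := hD t3 h3.1 h3.2
    rw [hsb0, hΦl t1 a1 b1 c1, hΦl t2 a2 b2 c2, hΦl t3 a3 b3 c3,
      Pat_mono hψm ⟨a1, b1, c1⟩ ⟨a2, b2, c2⟩ ⟨a3, b3, c3⟩]
    exact (sbtw_chart r2 t1 t2 t3).symm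
  have hΦinj : ∀ s t : Circ, (s ≠ r2 ∧ s ≠ R2.q (Sum.inr ())) →
      (t ≠ r2 ∧ t ≠ R2.q (Sum.inr ())) → Φ s = Φ t → s = t := by
    intro s t hs ht he
    obtain ⟨a1, b1, c1⟩ := hD s hs.1 hs.2
    obtain ⟨a2, b2, c2⟩ := hD t ht.1 ht.2
    have h1 : psi m1 m2 ε (lift1 (s - r2)) = psi m1 m2 ε (lift1 (t - r2)) := by
      rw [← hΦl s a1 b1 c1, ← hΦl t a2 b2 c2, he]
    exact hsub2inj (hψm.injOn ⟨a1, b1, c1⟩ ⟨a2, b2, c2⟩ h1)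
  have hnm2 : ∀ w : ↥V2, (R2.p (Sum.inl w) ≠ r2 ∧ R2.p (Sum.inl w) ≠ R2.q (Sum.inr ())) ∧
      (R2.q (Sum.inl w) ≠ r2 ∧ R2.q (Sum.inl w) ≠ R2.q (Sum.inr ())) := by
    intro w
    refine ⟨⟨?_, hpq2 _ _⟩, ⟨?_, ?_⟩⟩
    · intro h
      rw [hr2def] at h
      have h2 := hp2i h
      simp at h2
    · intro h
      rw [hr2def] at h
      exact hpq2 _ _ h.symm
    · intro h
      have h2 := hq2i h
      simp at h2
  have hT2nm : ∀ t ∈ T2, t ≠ r2 ∧ t ≠ R2.q (Sum.inr ()) := by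
    intro t ht
    have h := hT2e t ht (Sum.inr ())
    exact ⟨by rw [hr2def]; exact h.1, h.2⟩
  -- graph adjacency translations
  have hG1vv : ∀ (a b : V) (ha : a ∈ V1) (hb : b ∈ V1),
      G1.Adj (Sum.inl ⟨a, ha⟩) (Sum.inl ⟨b, hb⟩) ↔ G.Adj a b := by
    intro a b ha hb
    rw [hG1def, SimpleGraph.fromRel_adj]
    constructor
    · rintro ⟨hne, h | h⟩
      · exact h
      · exact h.symm
    · intro h
      refine ⟨?_, Or.inl h⟩
      intro hc
      rw [Sum.inl.injEq, Subtype.mk.injEq] at hc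
      exact h.ne hc
  have hG1m : ∀ (a : V) (ha : a ∈ V1),
      G1.Adj (Sum.inl ⟨a, ha⟩) (Sum.inr ()) ↔ ∃ y ∈ V2, G.Adj a y := by
    intro a ha
    rw [hG1def, SimpleGraph.fromRel_adj]
    constructor
    · rintro ⟨hne, h | h⟩
      · exact h
      · exact h.elim
    · intro h
      exact ⟨by simp, Or.inl h⟩
  have hG2vv : ∀ (a b : V) (ha : a ∈ V2) (hb : b ∈ V2),
      G2.Adj (Sum.inl ⟨a, ha⟩) (Sum.inl ⟨b, hb⟩) ↔ G.Adj a b := by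
    intro a b ha hb
    rw [hG2def, SimpleGraph.fromRel_adj]
    constructor
    · rintro ⟨hne, h | h⟩
      · exact h
      · exact h.symm
    · intro h
      refine ⟨?_, Or.inl h⟩
      intro hc
      rw [Sum.inl.injEq, Subtype.mk.injEq] at hc
      exact h.ne hc
  have hG2m : ∀ (a : V) (ha : a ∈ V2),
      G2.Adj (Sum.inl ⟨a, ha⟩) (Sum.inr ()) ↔ ∃ x ∈ V1, G.Adj a x := by
    intro a ha
    rw [hG2def, SimpleGraph.fromRel_adj]
    constructor
    · rintro ⟨hne, h | h⟩
      · exact h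
      · exact h.elim
    · intro h
      exact ⟨by simp, Or.inl h⟩
  have hmark1 : lift1 (r1 - r1) = 0 := by rw [sub_self, lift1_zero]
  have hmark2 : lift1 (r2 - r2) = 0 := by rw [sub_self, lift1_zero]
  -- crossing with the marker chord, in chart coordinates
  have hcross1 : ∀ (a : V) (ha : a ∈ V1), (∃ y ∈ V2, G.Adj a y) ↔
      Xor' (Pat 0 (lift1 (R1.p (Sum.inl ⟨a, ha⟩) - r1)) m1)
        (Pat 0 (lift1 (R1.q (Sum.inl ⟨a, ha⟩) - r1)) m1) := by
    intro a ha
    rw [← hG1m a ha, R1.adj (Sum.inl ⟨a, ha⟩) (Sum.inr ()), ← hr1def,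
      sbtw_chart r1, sbtw_chart r1, hmark1, ← hm1def,
      and_iff_right (by simp : (Sum.inl (⟨a, ha⟩ : ↥V1) : ↥V1 ⊕ Unit) ≠ Sum.inr ())]
  have hcross1' : ∀ (a : V) (ha : a ∈ V1), (∃ y ∈ V2, G.Adj a y) ↔
      Xor' (Pat (lift1 (R1.p (Sum.inl ⟨a, ha⟩) - r1)) 0 (lift1 (R1.q (Sum.inl ⟨a, ha⟩) - r1)))
        (Pat (lift1 (R1.p (Sum.inl ⟨a, ha⟩) - r1)) m1 (lift1 (R1.q (Sum.inl ⟨a, ha⟩) - r1))) := by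
    intro a ha
    have hcomm : G1.Adj (Sum.inr ()) (Sum.inl ⟨a, ha⟩) ↔ ∃ y ∈ V2, G.Adj a y := by
      rw [SimpleGraph.adj_comm]
      exact hG1m a ha
    rw [← hcomm, R1.adj (Sum.inr ()) (Sum.inl ⟨a, ha⟩), ← hr1def,
      sbtw_chart r1, sbtw_chart r1, hmark1, ← hm1def,
      and_iff_right (by simp : (Sum.inr () : ↥V1 ⊕ Unit) ≠ Sum.inl (⟨a, ha⟩ : ↥V1))]
  have hcross2 : ∀ (a : V) (ha : a ∈ V2), (∃ x ∈ V1, G.Adj a x) ↔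
      Xor' (lift1 (R2.p (Sum.inl ⟨a, ha⟩) - r2) < m2)
        (lift1 (R2.q (Sum.inl ⟨a, ha⟩) - r2) < m2) := by
    intro a ha
    obtain ⟨hpD, hqD⟩ := hnm2 ⟨a, ha⟩
    obtain ⟨pa, pb, pc⟩ := hD _ hpD.1 hpD.2
    obtain ⟨qa, qb, qc⟩ := hD _ hqD.1 hqD.2
    rw [← hG2m a ha, R2.adj (Sum.inl ⟨a, ha⟩) (Sum.inr ()), ← hr2def,
      sbtw_chart r2, sbtw_chart r2, hmark2, ← hm2def,
      and_iff_right (by simp : (Sum.inl (⟨a, ha⟩ : ↥V2) : ↥V2 ⊕ Unit) ≠ Sum.inr ()),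
      Pat_zero hm2pos.le, Pat_zero hm2pos.le, and_iff_right pa, and_iff_right qa]
  -- the new chords
  set P : V → Circ := fun w => if h : w ∈ V1 then R1.p (Sum.inl ⟨w, h⟩) - r1
    else Φ (R2.p (Sum.inl ⟨w, hv2 h⟩)) with hPdef
  set Q : V → Circ := fun w => if h : w ∈ V1 then R1.q (Sum.inl ⟨w, h⟩) - r1
    else Φ (R2.q (Sum.inl ⟨w, hv2 h⟩)) with hQdef
  have hP1 : ∀ (w : V) (h : w ∈ V1), P w = R1.p (Sum.inl ⟨w, h⟩) - r1 := by
    intro w h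
    simp only [hPdef]
    exact dif_pos h
  have hQ1 : ∀ (w : V) (h : w ∈ V1), Q w = R1.q (Sum.inl ⟨w, h⟩) - r1 := by
    intro w h
    simp only [hQdef]
    exact dif_pos h
  have hP2 : ∀ (w : V) (h : w ∉ V1), P w = Φ (R2.p (Sum.inl ⟨w, hv2 h⟩)) := by
    intro w h
    simp only [hPdef]
    exact dif_neg h
  have hQ2 : ∀ (w : V) (h : w ∉ V1), Q w = Φ (R2.q (Sum.inl ⟨w, hv2 h⟩)) := by
    intro w h
    simp only [hQdef]
    exact dif_neg h
  -- chart bundles for new points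
  have hch1 : ∀ (w : V) (h : w ∈ V1),
      (lift1 (P w) ∉ Set.Ico 0 ε ∧ lift1 (P w) ∉ Set.Ico m1 (m1+ε) ∧
        0 < lift1 (P w) ∧ lift1 (P w) ≠ m1) ∧
      (lift1 (Q w) ∉ Set.Ico 0 ε ∧ lift1 (Q w) ∉ Set.Ico m1 (m1+ε) ∧
        0 < lift1 (Q w) ∧ lift1 (Q w) ≠ m1) := by
    intro w h
    rw [hP1 w h, hQ1 w h]
    exact ⟨hV1pt ⟨w, h⟩ _ (Or.inl rfl), hV1pt ⟨w, h⟩ _ (Or.inr rfl)⟩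
  have hch2 : ∀ (w : V) (h : w ∉ V1),
      (lift1 (P w) ∈ Set.Ioo 0 ε ∪ Set.Ioo m1 (m1+ε)) ∧
      (lift1 (Q w) ∈ Set.Ioo 0 ε ∪ Set.Ioo m1 (m1+ε)) := by
    intro w h
    obtain ⟨hpD, hqD⟩ := hnm2 ⟨w, hv2 h⟩
    obtain ⟨pa, pb, pc⟩ := hD _ hpD.1 hpD.2
    obtain ⟨qa, qb, qc⟩ := hD _ hqD.1 hqD.2
    rw [hP2 w h, hQ2 w h, hΦl _ pa pb pc, hΦl _ qa qb qc]
    exact ⟨hψIoo _ pa pb pc, hψIoo _ qa qb qc⟩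
  have hmixP : ∀ (a b : V) (ha : a ∈ V1) (hb : b ∉ V1) (c d : Circ),
      (c = P a ∨ c = Q a) → (d = P b ∨ d = Q b) → c ≠ d := by
    intro a b ha hb c d hc hd he
    have h1 : lift1 c ∉ Set.Ico 0 ε ∧ lift1 c ∉ Set.Ico m1 (m1+ε) := by
      rcases hc with h | h <;> rw [h]
      · exact ⟨(hch1 a ha).1.1, (hch1 a ha).1.2.1⟩
      · exact ⟨(hch1 a ha).2.1, (hch1 a ha).2.2.1⟩
    have h2 : lift1 d ∈ Set.Ioo 0 ε ∪ Set.Ioo m1 (m1+ε) := by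
      rcases hd with h | h <;> rw [h]
      · exact (hch2 b hb).1
      · exact (hch2 b hb).2
    rw [he] at h1
    rcases h2 with h | h
    · exact h1.1 (Set.Ioo_subset_Ico_self h)
    · exact h1.2 (Set.Ioo_subset_Ico_self h)
  refine ⟨⟨P, Q, ?_, ?_⟩, (T1.image (fun t => t - r1)) ∪ T2.image Φ, ?_, ?_⟩
  · -- injectivity
    intro a b hab
    rcases a with a | a <;> rcases b with b | b <;>
      simp only [Sum.elim_inl, Sum.elim_inr] at hab
    · by_cases ha : a ∈ V1 <;> by_cases hb : b ∈ V1
      · rw [hP1 a ha, hP1 b hb] at hab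
        have h2 := hp1i (sub_left_inj.mp hab)
        rw [Sum.inl.injEq, Subtype.mk.injEq] at h2
        rw [h2]
      · exact absurd hab (hmixP a b ha hb _ _ (Or.inl rfl) (Or.inl rfl))
      · exact absurd hab.symm (hmixP b a hb ha _ _ (Or.inl rfl) (Or.inl rfl))
      · rw [hP2 a ha, hP2 b hb] at hab
        have h2 := hΦinj _ _ (hnm2 ⟨a, hv2 ha⟩).1 (hnm2 ⟨b, hv2 hb⟩).1 hab
        have h3 := hp2i h2
        rw [Sum.inl.injEq, Subtype.mk.injEq] at h3
        rw [h3]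
    · exfalso
      by_cases ha : a ∈ V1 <;> by_cases hb : b ∈ V1
      · rw [hP1 a ha, hQ1 b hb] at hab
        exact hpq1 _ _ (sub_left_inj.mp hab)
      · exact (hmixP a b ha hb _ _ (Or.inl rfl) (Or.inr rfl)) hab
      · exact (hmixP b a hb ha _ _ (Or.inr rfl) (Or.inl rfl)) hab.symm
      · rw [hP2 a ha, hQ2 b hb] at hab
        have h2 := hΦinj _ _ (hnm2 ⟨a, hv2 ha⟩).1 (hnm2 ⟨b, hv2 hb⟩).2 hab
        exact hpq2 _ _ h2
    · exfalso
      by_cases ha : a ∈ V1 <;> by_cases hb : b ∈ V1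
      · rw [hQ1 a ha, hP1 b hb] at hab
        exact hpq1 _ _ (sub_left_inj.mp hab).symm
      · exact (hmixP a b ha hb _ _ (Or.inr rfl) (Or.inl rfl)) hab
      · exact (hmixP b a hb ha _ _ (Or.inl rfl) (Or.inr rfl)) hab.symm
      · rw [hQ2 a ha, hP2 b hb] at hab
        have h2 := hΦinj _ _ (hnm2 ⟨a, hv2 ha⟩).2 (hnm2 ⟨b, hv2 hb⟩).1 hab
        exact hpq2 _ _ h2.symm
    · by_cases ha : a ∈ V1 <;> by_cases hb : b ∈ V1
      · rw [hQ1 a ha, hQ1 b hb] at hab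
        have h2 := hq1i (sub_left_inj.mp hab)
        rw [Sum.inl.injEq, Subtype.mk.injEq] at h2
        rw [h2]
      · exact absurd hab (hmixP a b ha hb _ _ (Or.inr rfl) (Or.inr rfl))
      · exact absurd hab.symm (hmixP b a hb ha _ _ (Or.inr rfl) (Or.inr rfl))
      · rw [hQ2 a ha, hQ2 b hb] at hab
        have h2 := hΦinj _ _ (hnm2 ⟨a, hv2 ha⟩).2 (hnm2 ⟨b, hv2 hb⟩).2 hab
        have h3 := hq2i h2
        rw [Sum.inl.injEq, Subtype.mk.injEq] at h3
        rw [h3]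
  · -- adjacency
    intro u v
    show G.Adj u v ↔ u ≠ v ∧ Xor' (sbtw (P v) (P u) (Q v)) (sbtw (P v) (Q u) (Q v))
    by_cases hu : u ∈ V1 <;> by_cases hv : v ∈ V1
    · -- both in V1
      rw [hP1 u hu, hP1 v hv, hQ1 u hu, hQ1 v hv, ← sbtw_rot r1, ← sbtw_rot r1,
        ← hG1vv u v hu hv, R1.adj]
      constructor
      · rintro ⟨hne, hx⟩
        refine ⟨?_, hx⟩
        intro hc
        apply hne
        subst hc
        rfl
      · rintro ⟨hne, hx⟩
        refine ⟨?_, hx⟩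
        intro hc
        rw [Sum.inl.injEq, Subtype.mk.injEq] at hc
        exact hne hc
    · -- u ∈ V1, v ∈ V2
      have hne : u ≠ v := fun h => hv (h ▸ hu)
      obtain ⟨hpD, hqD⟩ := hnm2 ⟨v, hv2 hv⟩
      obtain ⟨pa, pb, pc⟩ := hD _ hpD.1 hpD.2
      obtain ⟨qa, qb, qc⟩ := hD _ hqD.1 hqD.2
      rw [hP1 u hu, hQ1 u hu, hP2 v hv, hQ2 v hv, hsb0, hsb0,
        hΦl _ pa pb pc, hΦl _ qa qb qc, hsp u hu v (hv2 hv)]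
      obtain ⟨xa, xb, xc, xd⟩ := hV1pt ⟨u, hu⟩ _ (Or.inl rfl)
      obtain ⟨ya, yb, yc, yd⟩ := hV1pt ⟨u, hu⟩ _ (Or.inr rfl)
      have hBiff : (∃ x' ∈ V1, G.Adj x' v) ↔ (∃ x' ∈ V1, G.Adj v x') := by
        constructor <;> rintro ⟨x', hx1, hx2⟩ <;> exact ⟨x', hx1, hx2.symm⟩
      by_cases hB : ∃ x' ∈ V1, G.Adj v x'
      · rcases (hcross2 v (hv2 hv)).mp hB with ⟨ha, hb⟩ | ⟨hb, ha⟩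
        · have hb' : m2 < lift1 (R2.q (Sum.inl ⟨v, hv2 hv⟩) - r2) :=
            lt_of_le_of_ne (not_lt.mp hb) (Ne.symm qc)
          have hsA := psi_A (m1 := m1) hε0 hm2pos pa ha
          have htB := psi_B (m1 := m1) hε0 hm2lt hb' qb
          rw [Pat_out1 hε0 hεm hsA htB xa xb, Pat_out1 hε0 hεm hsA htB ya yb, ← hcross1 u hu]
          exact ⟨fun h => ⟨hne, h.1⟩, fun h => ⟨h.2, hBiff.mpr hB⟩⟩
        · have ha' : m2 < lift1 (R2.p (Sum.inl ⟨v, hv2 hv⟩) - r2) :=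
            lt_of_le_of_ne (not_lt.mp ha) (Ne.symm pc)
          have hsB := psi_B (m1 := m1) hε0 hm2lt ha' pb
          have htA := psi_A (m1 := m1) hε0 hm2pos qa hb
          rw [Pat_out1' hε0 hεm hsB htA xa xb, Pat_out1' hε0 hεm hsB htA ya yb,
            Pat_rev xc.ne xd hm1pos.ne, Pat_rev yc.ne yd hm1pos.ne, xor_not_not',
            ← hcross1 u hu]
          exact ⟨fun h => ⟨hne, h.1⟩, fun h => ⟨h.2, hBiff.mpr hB⟩⟩
      · have hiff := not_xor_iff' (fun hx => hB ((hcross2 v (hv2 hv)).mpr hx))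
        by_cases ha : lift1 (R2.p (Sum.inl ⟨v, hv2 hv⟩) - r2) < m2
        · have hbq : lift1 (R2.q (Sum.inl ⟨v, hv2 hv⟩) - r2) < m2 := hiff.mp ha
          have hsA := psi_A (m1 := m1) hε0 hm2pos pa ha
          have htA := psi_A (m1 := m1) hε0 hm2pos qa hbq
          rw [Pat_same hsA htA xa xc.ne', Pat_same hsA htA ya yc.ne']
          constructor
          · rintro ⟨-, hBB⟩
            exact absurd (hBiff.mp hBB) hB
          · rintro ⟨-, hx⟩
            exact (xor_self' hx).elim
        · have ha' : m2 < lift1 (R2.p (Sum.inl ⟨v, hv2 hv⟩) - r2) :=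
            lt_of_le_of_ne (not_lt.mp ha) (Ne.symm pc)
          have hbq : m2 < lift1 (R2.q (Sum.inl ⟨v, hv2 hv⟩) - r2) := by
            rcases lt_or_gt_of_ne qc with h | h
            · exact absurd (hiff.mpr h) ha
            · exact h
          have hsB := psi_B (m1 := m1) hε0 hm2lt ha' pb
          have htB := psi_B (m1 := m1) hε0 hm2lt hbq qb
          rw [Pat_same hsB htB xb xd, Pat_same hsB htB yb yd]
          constructor
          · rintro ⟨-, hBB⟩
            exact absurd (hBiff.mp hBB) hB
          · rintro ⟨-, hx⟩
            exact (xor_self' hx).elim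
    · -- u ∈ V2, v ∈ V1
      have hne : u ≠ v := fun h => hu (h ▸ hv)
      obtain ⟨hpD, hqD⟩ := hnm2 ⟨u, hv2 hu⟩
      obtain ⟨pa, pb, pc⟩ := hD _ hpD.1 hpD.2
      obtain ⟨qa, qb, qc⟩ := hD _ hqD.1 hqD.2
      rw [hP1 v hv, hQ1 v hv, hP2 u hu, hQ2 u hu, hsb0, hsb0,
        hΦl _ pa pb pc, hΦl _ qa qb qc, SimpleGraph.adj_comm, hsp v hv u (hv2 hu)]
      obtain ⟨xa, xb, xc, xd⟩ := hV1pt ⟨v, hv⟩ _ (Or.inl rfl)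
      obtain ⟨ya, yb, yc, yd⟩ := hV1pt ⟨v, hv⟩ _ (Or.inr rfl)
      have hBiff : (∃ x' ∈ V1, G.Adj x' u) ↔ (∃ x' ∈ V1, G.Adj u x') := by
        constructor <;> rintro ⟨x', hx1, hx2⟩ <;> exact ⟨x', hx1, hx2.symm⟩
      by_cases hB : ∃ x' ∈ V1, G.Adj u x'
      · rcases (hcross2 u (hv2 hu)).mp hB with ⟨ha, hb⟩ | ⟨hb, ha⟩
        · have hb' : m2 < lift1 (R2.q (Sum.inl ⟨u, hv2 hu⟩) - r2) :=
            lt_of_le_of_ne (not_lt.mp hb) (Ne.symm qc)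
          have hsA := psi_A (m1 := m1) hε0 hm2pos pa ha
          have htB := psi_B (m1 := m1) hε0 hm2lt hb' qb
          rw [Pat_sub_mid hsA xa ya, Pat_sub_mid htB xb yb, ← hcross1' v hv]
          exact ⟨fun h => ⟨hne, h.1⟩, fun h => ⟨h.2, hBiff.mpr hB⟩⟩
        · have ha' : m2 < lift1 (R2.p (Sum.inl ⟨u, hv2 hu⟩) - r2) :=
            lt_of_le_of_ne (not_lt.mp ha) (Ne.symm pc)
          have hsB := psi_B (m1 := m1) hε0 hm2lt ha' pb
          have htA := psi_A (m1 := m1) hε0 hm2pos qa hb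
          rw [Pat_sub_mid hsB xb yb, Pat_sub_mid htA xa ya, xor_comm'', ← hcross1' v hv]
          exact ⟨fun h => ⟨hne, h.1⟩, fun h => ⟨h.2, hBiff.mpr hB⟩⟩
      · have hiff := not_xor_iff' (fun hx => hB ((hcross2 u (hv2 hu)).mpr hx))
        by_cases ha : lift1 (R2.p (Sum.inl ⟨u, hv2 hu⟩) - r2) < m2
        · have hbq : lift1 (R2.q (Sum.inl ⟨u, hv2 hu⟩) - r2) < m2 := hiff.mp ha
          have hsA := psi_A (m1 := m1) hε0 hm2pos pa ha
          have htA := psi_A (m1 := m1) hε0 hm2pos qa hbq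
          rw [Pat_sub_mid hsA xa ya, Pat_sub_mid htA xa ya]
          constructor
          · rintro ⟨-, hBB⟩
            exact absurd (hBiff.mp hBB) hB
          · rintro ⟨-, hx⟩
            exact (xor_self' hx).elim
        · have ha' : m2 < lift1 (R2.p (Sum.inl ⟨u, hv2 hu⟩) - r2) :=
            lt_of_le_of_ne (not_lt.mp ha) (Ne.symm pc)
          have hbq : m2 < lift1 (R2.q (Sum.inl ⟨u, hv2 hu⟩) - r2) := by
            rcases lt_or_gt_of_ne qc with h | h
            · exact absurd (hiff.mpr h) ha
            · exact h
          have hsB := psi_B (m1 := m1) hε0 hm2lt ha' pb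
          have htB := psi_B (m1 := m1) hε0 hm2lt hbq qb
          rw [Pat_sub_mid hsB xb yb, Pat_sub_mid htB xb yb]
          constructor
          · rintro ⟨-, hBB⟩
            exact absurd (hBiff.mp hBB) hB
          · rintro ⟨-, hx⟩
            exact (xor_self' hx).elim
    · -- both in V2
      rw [hP2 u hu, hQ2 u hu, hP2 v hv, hQ2 v hv,
        hΦs _ _ _ (hnm2 ⟨v, hv2 hv⟩).1 (hnm2 ⟨u, hv2 hu⟩).1 (hnm2 ⟨v, hv2 hv⟩).2,
        hΦs _ _ _ (hnm2 ⟨v, hv2 hv⟩).1 (hnm2 ⟨u, hv2 hu⟩).2 (hnm2 ⟨v, hv2 hv⟩).2,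
        ← hG2vv u v (hv2 hu) (hv2 hv), R2.adj]
      constructor
      · rintro ⟨hne, hx⟩
        refine ⟨?_, hx⟩
        intro hc
        apply hne
        subst hc
        rfl
      · rintro ⟨hne, hx⟩
        refine ⟨?_, hx⟩
        intro hc
        rw [Sum.inl.injEq, Subtype.mk.injEq] at hc
        exact hne hc
  · -- cardinality
    have hsubinj : Function.Injective (fun t : Circ => t - r1) := by
      intro a b h
      exact sub_left_inj.mp h
    have hdisj : Disjoint (T1.image (fun t => t - r1)) (T2.image Φ) := by
      rw [Finset.disjoint_left]
      intro z hz1 hz2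
      obtain ⟨t, ht, rfl⟩ := Finset.mem_image.mp hz1
      obtain ⟨t2, ht2, he⟩ := Finset.mem_image.mp hz2
      obtain ⟨a, b⟩ := hT1chart t ht
      obtain ⟨x1, x2, x3⟩ := hD t2 (hT2nm t2 ht2).1 (hT2nm t2 ht2).2
      have hl : lift1 (Φ t2) = psi m1 m2 ε (lift1 (t2 - r2)) := hΦl _ x1 x2 x3
      rw [he] at hl
      rcases hψIoo _ x1 x2 x3 with h | h
      · rw [← hl] at h
        exact a (Set.Ioo_subset_Ico_self h)
      · rw [← hl] at h
        exact b (Set.Ioo_subset_Ico_self h)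
    have hinjon : Set.InjOn Φ ↑T2 := by
      intro s hs t ht he
      exact hΦinj s t (hT2nm s (Finset.mem_coe.mp hs)) (hT2nm t (Finset.mem_coe.mp ht)) he
    rw [Finset.card_union_of_disjoint hdisj, Finset.card_image_of_injective _ hsubinj,
      Finset.card_image_of_injOn hinjon, hT1c, hT2c]
  · -- good corners
    constructor
    · intro t ht w
      rcases Finset.mem_union.mp ht with h | h
      · obtain ⟨t1, ht1, rfl⟩ := Finset.mem_image.mp h
        show t1 - r1 ≠ P w ∧ t1 - r1 ≠ Q w
        by_cases hw : w ∈ V1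
        · constructor
          · intro hc
            rw [hP1 w hw] at hc
            exact (hT1e t1 ht1 (Sum.inl ⟨w, hw⟩)).1 (sub_left_inj.mp hc)
          · intro hc
            rw [hQ1 w hw] at hc
            exact (hT1e t1 ht1 (Sum.inl ⟨w, hw⟩)).2 (sub_left_inj.mp hc)
        · have h1 := hT1chart t1 ht1
          constructor
          · intro hc
            have h2 := (hch2 w hw).1
            rw [← hc] at h2
            rcases h2 with h2 | h2
            · exact h1.1 (Set.Ioo_subset_Ico_self h2)
            · exact h1.2 (Set.Ioo_subset_Ico_self h2)
          · intro hc
            have h2 := (hch2 w hw).2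
            rw [← hc] at h2
            rcases h2 with h2 | h2
            · exact h1.1 (Set.Ioo_subset_Ico_self h2)
            · exact h1.2 (Set.Ioo_subset_Ico_self h2)
      · obtain ⟨t2, ht2, rfl⟩ := Finset.mem_image.mp h
        show Φ t2 ≠ P w ∧ Φ t2 ≠ Q w
        obtain ⟨x1, x2, x3⟩ := hD t2 (hT2nm t2 ht2).1 (hT2nm t2 ht2).2
        have hl : lift1 (Φ t2) = psi m1 m2 ε (lift1 (t2 - r2)) := hΦl _ x1 x2 x3
        by_cases hw : w ∈ V1
        · constructor
          · intro hc
            have h2 := (hch1 w hw).1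
            rw [hc] at hl
            rcases hψIoo _ x1 x2 x3 with hh | hh
            · rw [← hl] at hh
              exact h2.1 (Set.Ioo_subset_Ico_self hh)
            · rw [← hl] at hh
              exact h2.2.1 (Set.Ioo_subset_Ico_self hh)
          · intro hc
            have h2 := (hch1 w hw).2
            rw [hc] at hl
            rcases hψIoo _ x1 x2 x3 with hh | hh
            · rw [← hl] at hh
              exact h2.1 (Set.Ioo_subset_Ico_self hh)
            · rw [← hl] at hh
              exact h2.2.1 (Set.Ioo_subset_Ico_self hh)
        · constructor
          · intro hc
            rw [hP2 w hw] at hc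
            have h3 := hΦinj _ _ (hT2nm t2 ht2) (hnm2 ⟨w, hv2 hw⟩).1 hc
            exact (hT2e t2 ht2 (Sum.inl ⟨w, hv2 hw⟩)).1 h3
          · intro hc
            rw [hQ2 w hw] at hc
            have h3 := hΦinj _ _ (hT2nm t2 ht2) (hnm2 ⟨w, hv2 hw⟩).2 hc
            exact (hT2e t2 ht2 (Sum.inl ⟨w, hv2 hw⟩)).2 h3
    · intro w
      by_cases hw : w ∈ V1
      · obtain ⟨⟨c, hcT, hc⟩, ⟨c', hcT', hc'⟩⟩ := hT1s (Sum.inl ⟨w, hw⟩)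
        rw [mem_arc_true] at hc
        rw [mem_arc_false] at hc'
        constructor
        · refine ⟨c - r1, Finset.mem_union_left _ (Finset.mem_image_of_mem _ hcT), ?_⟩
          rw [mem_arc_true]
          show sbtw (P w) (c - r1) (Q w)
          rw [hP1 w hw, hQ1 w hw]
          exact (sbtw_rot r1 _ _ _).mp hc
        · refine ⟨c' - r1, Finset.mem_union_left _ (Finset.mem_image_of_mem _ hcT'), ?_⟩
          rw [mem_arc_false]
          show sbtw (Q w) (c' - r1) (P w)
          rw [hP1 w hw, hQ1 w hw]
          exact (sbtw_rot r1 _ _ _).mp hc'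
      · obtain ⟨⟨c, hcT, hc⟩, ⟨c', hcT', hc'⟩⟩ := hT2s (Sum.inl ⟨w, hv2 hw⟩)
        rw [mem_arc_true] at hc
        rw [mem_arc_false] at hc'
        constructor
        · refine ⟨Φ c, Finset.mem_union_right _ (Finset.mem_image_of_mem _ hcT), ?_⟩
          rw [mem_arc_true]
          show sbtw (P w) (Φ c) (Q w)
          rw [hP2 w hw, hQ2 w hw]
          exact (hΦs _ _ _ (hnm2 ⟨w, hv2 hw⟩).1 (hT2nm c hcT) (hnm2 ⟨w, hv2 hw⟩).2).mpr hc
        · refine ⟨Φ c', Finset.mem_union_right _ (Finset.mem_image_of_mem _ hcT'), ?_⟩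
          rw [mem_arc_false]
          show sbtw (Q w) (Φ c') (P w)
          rw [hP2 w hw, hQ2 w hw]
          exact (hΦs _ _ _ (hnm2 ⟨w, hv2 hw⟩).2 (hT2nm c' hcT') (hnm2 ⟨w, hv2 hw⟩).1).mpr hc'
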